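/- Let G be a graph of girth g ≥ 5, let X ⊆ V(G) with |X| = g−2 such that G[X] has exactly two components K_1 and K_2. Then at most two vertices of N_G(X) have neighbors in both K_1 and K_2. -/

import Mathlib

open scoped Classical

variable {V : Type*}

/-- The external neighborhood of a set of vertices. -/
def extNbhd (G : SimpleGraph V) (X : Set V) : Set V :=
  {v | v ∉ X ∧ ∃ x ∈ X, G.Adj v x}

/-- The vertex set (in `V`) of a connected component of the induced subgraph `G[X]`. -/
def compVerts (G : SimpleGraph V) (X : Set V)
    (C : (G.induce X).ConnectedComponent) : Set V :=
  {y | ∃ x : X, (G.induce X).connectedComponentMk x = C ∧ (x : V) = y}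

/-- `w` has a neighbor in the component `C` of `G[X]`. -/
def touches (G : SimpleGraph V) (X : Set V) (w : V)
    (C : (G.induce X).ConnectedComponent) : Prop :=
  ∃ x : X, (G.induce X).connectedComponentMk x = C ∧ G.Adj w (x : V)

open SimpleGraph in
/-- Every vertex on a walk in `G.induce X` lies in the same connected component
as the start vertex. -/
lemma aux_comp_of_mem_support {G : SimpleGraph V} {X : Set V} {a b : X}
    (p : (G.induce X).Walk a b) {z : X} (hz : z ∈ p.support) :
    (G.induce X).connectedComponentMk z = (G.induce X).connectedComponentMk a :=
  (ConnectedComponent.sound (p.takeUntil z hz).reachable).symm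

open SimpleGraph in
/-- Any path in the induced graph has length bounded by the size of the component
containing its endpoints. -/
lemma aux_path_length_le {G : SimpleGraph V} {X : Set V} (hXfin : X.Finite) {a b : X}
    {p : (G.induce X).Walk a b} (hp : p.IsPath) :
    p.length + 1 ≤ {x : X | (G.induce X).connectedComponentMk x
      = (G.induce X).connectedComponentMk a}.ncard := by
  have hfin : {x : X | (G.induce X).connectedComponentMk x
      = (G.induce X).connectedComponentMk a}.Finite := by
    have : Finite X := hXfin
    exact Set.toFinite _
  classical
  have hsub : p.support.toFinset ⊆ hfin.toFinset := by
    intro z hz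
    simp only [List.mem_toFinset] at hz
    simp only [Set.Finite.mem_toFinset, Set.mem_setOf_eq]
    exact aux_comp_of_mem_support p hz
  have hcard : p.support.toFinset.card = p.length + 1 := by
    rw [List.toFinset_card_of_nodup hp.support_nodup, Walk.length_support]
  calc p.length + 1 = p.support.toFinset.card := hcard.symm
    _ ≤ hfin.toFinset.card := Finset.card_le_card hsub
    _ = _ := by rw [Set.ncard_eq_toFinset_card _ hfin]

open SimpleGraph in
/-- The key cycle construction: two outside vertices both joined to two components
yield a cycle of length `p1.length + p2.length + 4`. -/
lemma aux_key_cycle {G : SimpleGraph V} {X : Set V} {g : ℕ}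
    (hgirth : ∀ {c : V} (w : G.Walk c c), w.IsCycle → g ≤ w.length)
    {w w' : V} (hww' : w ≠ w') (hw : w ∉ X) (hw' : w' ∉ X)
    {a a' b b' : X}
    (hCa : (G.induce X).connectedComponentMk a' = (G.induce X).connectedComponentMk a)
    (hDb : (G.induce X).connectedComponentMk b' = (G.induce X).connectedComponentMk b)
    (hCD : (G.induce X).connectedComponentMk a ≠ (G.induce X).connectedComponentMk b)
    (ha : G.Adj w a) (ha' : G.Adj w' a') (hb : G.Adj w b) (hb' : G.Adj w' b')
    {p1 : (G.induce X).Walk a a'} (hp1 : p1.IsPath)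
    {p2 : (G.induce X).Walk b' b} (hp2 : p2.IsPath) :
    g ≤ p1.length + p2.length + 4 := by
  classical
  set emb : G.induce X ↪g G := SimpleGraph.Embedding.induce X with hemb
  let q1 : G.Walk (a : V) (a' : V) := p1.map emb.toHom
  let q2 : G.Walk (b' : V) (b : V) := p2.map emb.toHom
  have hq1sup : ∀ z ∈ q1.support, ∃ x : X, (x : V) = z ∧
      (G.induce X).connectedComponentMk x = (G.induce X).connectedComponentMk a := by
    intro z hz
    rw [show q1.support = (p1.map emb.toHom).support from rfl, Walk.support_map, List.mem_map] at hz
    obtain ⟨x, hx, rfl⟩ := hz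
    exact ⟨x, rfl, aux_comp_of_mem_support p1 hx⟩
  have hq2sup : ∀ z ∈ q2.support, ∃ x : X, (x : V) = z ∧
      (G.induce X).connectedComponentMk x = (G.induce X).connectedComponentMk b := by
    intro z hz
    rw [show q2.support = (p2.map emb.toHom).support from rfl, Walk.support_map, List.mem_map] at hz
    obtain ⟨x, hx, rfl⟩ := hz
    exact ⟨x, rfl, (aux_comp_of_mem_support p2 hx).trans hDb⟩
  have hq1X : ∀ z ∈ q1.support, z ∈ X := by
    intro z hz; obtain ⟨x, rfl, -⟩ := hq1sup z hz; exact x.2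
  have hq2X : ∀ z ∈ q2.support, z ∈ X := by
    intro z hz; obtain ⟨x, rfl, -⟩ := hq2sup z hz; exact x.2
  have hdisj : ∀ z, z ∈ q1.support → z ∈ q2.support → False := by
    intro z hz1 hz2
    obtain ⟨x, hxz, hx⟩ := hq1sup z hz1
    obtain ⟨y, hyz, hy⟩ := hq2sup z hz2
    have : x = y := Subtype.ext (hxz.trans hyz.symm)
    exact hCD (by rw [← hx, this, hy])
  let S : G.Walk (b : V) w := Walk.cons hb.symm Walk.nil
  let R2 : G.Walk (b' : V) w := q2.append S
  let R1 : G.Walk w' w := Walk.cons hb' R2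
  let R : G.Walk (a' : V) w := Walk.cons ha'.symm R1
  let P : G.Walk (a : V) w := q1.append R
  have hPsup : P.support = q1.support ++ (w' :: (q2.support ++ [w])) := by
    simp [P, R, R1, R2, S, Walk.support_append]
  have hq1p : q1.IsPath := Walk.map_isPath_of_injective emb.injective hp1
  have hq2p : q2.IsPath := Walk.map_isPath_of_injective emb.injective hp2
  have hPpath : P.IsPath := by
    rw [Walk.isPath_def, hPsup, List.nodup_append]
    refine ⟨hq1p.support_nodup, ?_, ?_⟩
    · rw [List.nodup_cons]
      constructor
      · intro h
        rcases List.mem_append.mp h with h | h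
        · exact hw' (hq2X _ h)
        · exact hww' ((List.mem_singleton.mp h).symm)
      · rw [List.nodup_append]
        refine ⟨hq2p.support_nodup, List.nodup_singleton _, ?_⟩
        intro z hz y hzw hzy
        rw [List.mem_singleton] at hzw
        subst hzw hzy
        exact hw (hq2X _ hz)
    · intro z hz1 y hz2 hzy; subst hzy
      rcases List.mem_cons.mp hz2 with rfl | h
      · exact hw' (hq1X _ hz1)
      · rcases List.mem_append.mp h with h | h
        · exact hdisj z hz1 h
        · rw [List.mem_singleton] at h; subst h
          exact hw (hq1X _ hz1)
  have hedge : s(w, (a : V)) ∉ P.edges := by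
    intro h
    have hPedges : P.edges = q1.edges ++
        (s((a' : V), w') :: s(w', (b' : V)) :: (q2.edges ++ [s((b : V), w)])) := by
      simp [P, R, R1, R2, S, Walk.edges_append]
    rw [hPedges] at h
    rcases List.mem_append.mp h with h | h
    · exact hw (hq1X _ (Walk.fst_mem_support_of_mem_edges q1 h))
    · rcases List.mem_cons.mp h with h | h
      · rw [Sym2.eq_iff] at h
        rcases h with ⟨h1, h2⟩ | ⟨h1, h2⟩
        · exact hw (h1 ▸ a'.2)
        · exact hww' h1
      · rcases List.mem_cons.mp h with h | h
        · rw [Sym2.eq_iff] at h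
          rcases h with ⟨h1, h2⟩ | ⟨h1, h2⟩
          · exact hww' h1
          · exact hw (h1 ▸ b'.2)
        · rcases List.mem_append.mp h with h | h
          · exact hw (hq2X _ (Walk.fst_mem_support_of_mem_edges q2 h))
          · rw [List.mem_singleton, Sym2.eq_iff] at h
            rcases h with ⟨h1, h2⟩ | ⟨h1, h2⟩
            · exact hw (h1 ▸ b.2)
            · exact hCD (by rw [Subtype.ext h2.symm])
  have hcyc : (Walk.cons ha P).IsCycle := by
    rw [Walk.cons_isCycle_iff]
    exact ⟨hPpath, hedge⟩
  have hlen := hgirth (Walk.cons ha P) hcyc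
  have : (Walk.cons ha P).length = p1.length + p2.length + 4 := by
    simp only [P, R, R1, R2, S, Walk.length_append, Walk.length_cons, Walk.length_nil]
    have e1 : q1.length = p1.length := Walk.length_map _ _
    have e2 : q2.length = p2.length := Walk.length_map _ _
    omega
  omega

open SimpleGraph in
/-- Three distinct outside vertices cannot each touch both components. -/
lemma aux_endgame {G : SimpleGraph V} {X : Set V} (hXfin : X.Finite) {g : ℕ}
    (hgirth : ∀ {c : V} (w : G.Walk c c), w.IsCycle → g ≤ w.length)
    {C D : (G.induce X).ConnectedComponent} (hCD : C ≠ D)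
    (hcard : {x : X | (G.induce X).connectedComponentMk x = C}.ncard +
             {x : X | (G.induce X).connectedComponentMk x = D}.ncard + 2 = g)
    (hC2 : 2 ≤ {x : X | (G.induce X).connectedComponentMk x = C}.ncard)
    {w1 w2 w3 : V} (h12 : w1 ≠ w2) (h13 : w1 ≠ w3) (h23 : w2 ≠ w3)
    (hw1 : w1 ∉ X) (hw2 : w2 ∉ X) (hw3 : w3 ∉ X)
    (hC1 : ∃ x : X, (G.induce X).connectedComponentMk x = C ∧ G.Adj w1 x)
    (hC2' : ∃ x : X, (G.induce X).connectedComponentMk x = C ∧ G.Adj w2 x)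
    (hC3 : ∃ x : X, (G.induce X).connectedComponentMk x = C ∧ G.Adj w3 x)
    (hD1 : ∃ x : X, (G.induce X).connectedComponentMk x = D ∧ G.Adj w1 x)
    (hD2 : ∃ x : X, (G.induce X).connectedComponentMk x = D ∧ G.Adj w2 x)
    (hD3 : ∃ x : X, (G.induce X).connectedComponentMk x = D ∧ G.Adj w3 x) :
    False := by
  classical
  set nC := {x : X | (G.induce X).connectedComponentMk x = C}.ncard with hnC
  set nD := {x : X | (G.induce X).connectedComponentMk x = D}.ncard with hnD
  have hfinC : {x : X | (G.induce X).connectedComponentMk x = C}.Finite := by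
    have : Finite X := hXfin
    exact Set.toFinite _
  have LB : ∀ (u v : V), u ≠ v → u ∉ X → v ∉ X →
      (∃ x : X, (G.induce X).connectedComponentMk x = D ∧ G.Adj u x) →
      (∃ x : X, (G.induce X).connectedComponentMk x = D ∧ G.Adj v x) →
      ∀ (a a' : X), (G.induce X).connectedComponentMk a = C →
        (G.induce X).connectedComponentMk a' = C → G.Adj u a → G.Adj v a' →
      ∀ (p : (G.induce X).Walk a a'), p.IsPath → nC ≤ p.length + 1 := by
    intro u v huv hu hv ⟨b, hbD, hub⟩ ⟨b', hb'D, hvb'⟩ a a' haC ha'C hua hva p hp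
    have hreach : (G.induce X).Reachable b' b :=
      ConnectedComponent.exact (hb'D.trans hbD.symm)
    obtain ⟨p0⟩ := hreach
    have hkey := aux_key_cycle hgirth huv hu hv (ha'C.trans haC.symm) (hb'D.trans hbD.symm)
      (by rw [haC, hbD]; exact hCD) hua hva hub hvb' hp p0.bypass_isPath
    have hlen2 : p0.bypass.length + 1 ≤ nD := by
      have := aux_path_length_le hXfin (p := p0.bypass) p0.bypass_isPath
      rwa [hb'D] at this
    omega
  obtain ⟨a1, ha1C, ha1⟩ := hC1
  obtain ⟨a2, ha2C, ha2⟩ := hC2'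
  obtain ⟨a3, ha3C, ha3⟩ := hC3
  have hne12 : a1 ≠ a2 := by
    rintro rfl
    have := LB w1 w2 h12 hw1 hw2 hD1 hD2 a1 a1 ha1C ha1C ha1 ha2 Walk.nil (by simp)
    simp at this; omega
  have hne23 : a2 ≠ a3 := by
    rintro rfl
    have := LB w2 w3 h23 hw2 hw3 hD2 hD3 a2 a2 ha2C ha2C ha2 ha3 Walk.nil (by simp)
    simp at this; omega
  obtain ⟨p0⟩ := (ConnectedComponent.exact (ha1C.trans ha2C.symm) :
      (G.induce X).Reachable a1 a2)
  set p := p0.bypass with hpdef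
  have hp : p.IsPath := p0.bypass_isPath
  have hub : p.length + 1 ≤ nC := by
    have := aux_path_length_le hXfin (p := p) hp
    rwa [ha1C] at this
  have hlb : nC ≤ p.length + 1 := LB w1 w2 h12 hw1 hw2 hD1 hD2 a1 a2 ha1C ha2C ha1 ha2 p hp
  have hlen : p.length + 1 = nC := le_antisymm hub hlb
  have hsub : p.support.toFinset ⊆ hfinC.toFinset := by
    intro z hz
    rw [List.mem_toFinset] at hz
    rw [Set.Finite.mem_toFinset, Set.mem_setOf_eq]
    rw [aux_comp_of_mem_support p hz]; exact ha1C
  have hcards : hfinC.toFinset.card ≤ p.support.toFinset.card := by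
    rw [List.toFinset_card_of_nodup hp.support_nodup, Walk.length_support,
      ← Set.ncard_eq_toFinset_card _ hfinC]
    omega
  have hmem : a3 ∈ p.support := by
    have := Finset.eq_of_subset_of_card_le hsub hcards
    have h3 : a3 ∈ hfinC.toFinset := by rw [Set.Finite.mem_toFinset]; exact ha3C
    rw [← this, List.mem_toFinset] at h3
    exact h3
  set q := p.takeUntil a3 hmem with hqdef
  have hq : q.IsPath := hp.takeUntil hmem
  have hlbq : nC ≤ q.length + 1 := LB w1 w3 h13 hw1 hw3 hD1 hD3 a1 a3 ha1C ha3C ha1 ha3 q hq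
  have hdrop : 1 ≤ (p.dropUntil a3 hmem).length := by
    rcases Nat.eq_zero_or_pos (p.dropUntil a3 hmem).length with h | h
    · exact absurd (Walk.eq_of_length_eq_zero h) hne23.symm
    · exact h
  have hsplit : q.length + (p.dropUntil a3 hmem).length = p.length := by
    have hts := Walk.take_spec p hmem
    calc q.length + (p.dropUntil a3 hmem).length
        = ((p.takeUntil a3 hmem).append (p.dropUntil a3 hmem)).length := by
          rw [Walk.length_append]
      _ = p.length := by rw [hts]
  omega

/-- If `G` has girth `g ≥ 5`, `|X| = g - 2`, and `G[X]` has exactly two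
components, then at most two vertices of `N_G(X)` have neighbors in both of them. -/
theorem stmt_9 [Fintype V] (G : SimpleGraph V) (g : ℕ)
    (hg : G.girth = (g : ℕ∞)) (hg5 : 5 ≤ g)
    (X : Set V) (hX : X.ncard = g - 2)
    (hp : Nat.card ((G.induce X).ConnectedComponent) = 2)
    (C D : (G.induce X).ConnectedComponent) (hCD : C ≠ D) :
    {v ∈ extNbhd G X | touches G X v C ∧ touches G X v D}.ncard ≤ 2 := by
  classical
  -- girth bound for cycles
  have hgn : G.girth = g := by exact_mod_cast hg
  have hnacyc : ¬ G.IsAcyclic := by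
    intro h
    rw [h.girth_eq_zero] at hgn
    omega
  have hegirth : G.egirth = (g : ℕ∞) := by
    have hne : G.egirth ≠ ⊤ := by
      simp only [ne_eq, SimpleGraph.egirth_eq_top]; exact hnacyc
    rw [← hgn, SimpleGraph.girth, ENat.coe_toNat hne]
  have hgirth : ∀ {c : V} (w : G.Walk c c), w.IsCycle → g ≤ w.length := by
    intro c w hw
    have h1 : (g : ℕ∞) ≤ w.length := by
      rw [← hegirth]
      exact SimpleGraph.le_egirth.mp le_rfl c w hw
    exact_mod_cast h1
  have hXfin : X.Finite := X.toFinite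
  have : Finite X := hXfin
  -- the two components
  have htwo : ∀ E : (G.induce X).ConnectedComponent, E = C ∨ E = D := by
    obtain ⟨x, y, hxy, hU⟩ := Nat.card_eq_two_iff.mp hp
    have hmem : ∀ z : (G.induce X).ConnectedComponent, z = x ∨ z = y := by
      intro z
      have : z ∈ ({x, y} : Set _) := hU ▸ Set.mem_univ z
      simpa using this
    intro E
    rcases hmem E with rfl | rfl <;> rcases hmem C with rfl | rfl <;>
      rcases hmem D with rfl | rfl <;> tauto
  -- cardinalities
  set SC := {x : X | (G.induce X).connectedComponentMk x = C} with hSC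
  set SD := {x : X | (G.induce X).connectedComponentMk x = D} with hSD
  have hdisjCD : Disjoint SC SD := by
    rw [Set.disjoint_left]
    intro z hz1 hz2
    exact hCD (hz1.symm.trans hz2)
  have hunion : SC ∪ SD = Set.univ := by
    ext z
    simp only [Set.mem_union, Set.mem_setOf_eq, Set.mem_univ, iff_true, hSC, hSD]
    exact htwo _
  have hsum : SC.ncard + SD.ncard = g - 2 := by
    rw [← Set.ncard_union_eq hdisjCD (Set.toFinite _) (Set.toFinite _), hunion,
      Set.ncard_univ, Nat.card_coe_set_eq]
    exact hX
  have hCne : 1 ≤ SC.ncard := by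
    obtain ⟨x, hx⟩ := C.exists_rep
    have : SC.Nonempty := ⟨x, hx⟩
    exact (Set.ncard_pos (Set.toFinite _)).mpr this
  have hDne : 1 ≤ SD.ncard := by
    obtain ⟨x, hx⟩ := D.exists_rep
    have : SD.Nonempty := ⟨x, hx⟩
    exact (Set.ncard_pos (Set.toFinite _)).mpr this
  have hcardsum : SC.ncard + SD.ncard + 2 = g := by omega
  -- counting argument
  by_contra hcon
  push_neg at hcon
  have h3 : 3 ≤ {v ∈ extNbhd G X | touches G X v C ∧ touches G X v D}.ncard := hcon
  obtain ⟨t, hts, ht3⟩ := Set.exists_subset_card_eq h3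
  obtain ⟨w1, w2, w3, h12, h13, h23, rfl⟩ := Set.ncard_eq_three.mp ht3
  have hm1 := hts (show w1 ∈ ({w1, w2, w3} : Set V) by simp)
  have hm2 := hts (show w2 ∈ ({w1, w2, w3} : Set V) by simp)
  have hm3 := hts (show w3 ∈ ({w1, w2, w3} : Set V) by simp)
  obtain ⟨⟨hw1X, -⟩, hw1C, hw1D⟩ := hm1
  obtain ⟨⟨hw2X, -⟩, hw2C, hw2D⟩ := hm2
  obtain ⟨⟨hw3X, -⟩, hw3C, hw3D⟩ := hm3
  rcases le_or_gt 2 SC.ncard with hge | hlt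
  · exact aux_endgame hXfin hgirth hCD hcardsum hge h12 h13 h23 hw1X hw2X hw3X
      hw1C hw2C hw3C hw1D hw2D hw3D
  · have hge' : 2 ≤ SD.ncard := by omega
    exact aux_endgame hXfin hgirth hCD.symm (show SD.ncard + SC.ncard + 2 = g by omega) hge' h12 h13 h23 hw1X hw2X hw3X
      hw1D hw2D hw3D hw1C hw2C hw3C
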